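/- Let (H_s, k^s) and (H_ℓ, k^ℓ) be RKHSs on the open unit disc 𝔻 ⊂ ℂ such that for every f ∈ H_s the function z ↦ z·f̂(z) is induced by a (necessarily unique) element Z_s f ∈ H_s, and for every g ∈ H_ℓ the function z ↦ z·ĝ(z) is induced by an element Z_ℓ g ∈ H_ℓ. Suppose there exists f ∈ H_s whose induced function f̂ is nonzero at some point of 𝔻 ∖ {0}, such that for every g ∈ H_ℓ one has ‖Z_ℓ^n g‖_{H_ℓ} / ‖Z_s^n f‖_{H_s} → 0 as n → ∞. Then no multiplication operator from H_s to H_ℓ is bounded below: for every φ ∈ Mult(H_s, H_ℓ) and every c > 0 there exists h ∈ H_s with ‖M_φ h‖ < c·‖h‖. In particular, no injective multiplication operator M_φ : H_s → H_ℓ has closed range. -/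

import Mathlib

noncomputable section

open scoped InnerProductSpace ComplexOrder

/-- `φ : X → ℂ` is a multiplier from the RKHS on `X` with kernel map `k` to the RKHS with
kernel map `l`, implemented by the bounded operator `T`, i.e. `T* l_x = conj (φ x) • k_x`. -/
def IsMultiplier {X Hk Hl : Type*}
    [NormedAddCommGroup Hk] [InnerProductSpace ℂ Hk] [CompleteSpace Hk]
    [NormedAddCommGroup Hl] [InnerProductSpace ℂ Hl] [CompleteSpace Hl]
    (k : X → Hk) (l : X → Hl) (φ : X → ℂ) (T : Hk →L[ℂ] Hl) : Prop :=
  ∀ x, ContinuousLinearMap.adjoint T (l x) = (starRingEnd ℂ) (φ x) • k x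

/-- If `H_s`, `H_ℓ` are RKHSs on the unit disc invariant under multiplication by `z`, and
there is `f ∈ H_s`, not identically zero off the origin, with
`‖z^n g‖_{H_ℓ} / ‖z^n f‖_{H_s} → 0` for every `g ∈ H_ℓ`, then no multiplication operator
`M_φ : H_s → H_ℓ` is bounded below; in particular no injective `M_φ` has closed range. -/
theorem statement18 {Hs Hl : Type*}
    [NormedAddCommGroup Hs] [InnerProductSpace ℂ Hs] [CompleteSpace Hs]
    [NormedAddCommGroup Hl] [InnerProductSpace ℂ Hl] [CompleteSpace Hl]
    (ks : {z : ℂ // ‖z‖ < 1} → Hs) (kl : {z : ℂ // ‖z‖ < 1} → Hl)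
    (hks : ∀ x, ks x ≠ 0) (hkl : ∀ x, kl x ≠ 0)
    (hdense_s : Dense ((Submodule.span ℂ (Set.range ks) : Submodule ℂ Hs) : Set Hs))
    (hdense_l : Dense ((Submodule.span ℂ (Set.range kl) : Submodule ℂ Hl) : Set Hl))
    (Zs : Hs → Hs)
    (hZs : ∀ (f : Hs) (z : {z : ℂ // ‖z‖ < 1}), ⟪ks z, Zs f⟫_ℂ = (z : ℂ) * ⟪ks z, f⟫_ℂ)
    (Zl : Hl → Hl)
    (hZl : ∀ (g : Hl) (z : {z : ℂ // ‖z‖ < 1}), ⟪kl z, Zl g⟫_ℂ = (z : ℂ) * ⟪kl z, g⟫_ℂ)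
    (f : Hs) (hf : ∃ z : {z : ℂ // ‖z‖ < 1}, (z : ℂ) ≠ 0 ∧ ⟪ks z, f⟫_ℂ ≠ 0)
    (hlim : ∀ g : Hl,
      Filter.Tendsto (fun n => ‖Zl^[n] g‖ / ‖Zs^[n] f‖) Filter.atTop (nhds 0)) :
    (∀ (φ : {z : ℂ // ‖z‖ < 1} → ℂ) (T : Hs →L[ℂ] Hl), IsMultiplier ks kl φ T →
      ∀ c > (0 : ℝ), ∃ h : Hs, ‖T h‖ < c * ‖h‖) ∧
    (∀ (φ : {z : ℂ // ‖z‖ < 1} → ℂ) (T : Hs →L[ℂ] Hl), IsMultiplier ks kl φ T →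
      Function.Injective T → ¬ IsClosed (Set.range T)) := by
  obtain ⟨z0, hz0, hfz0⟩ := hf
  -- iterates of Zs
  have hiter_s : ∀ (n : ℕ) (z : {z : ℂ // ‖z‖ < 1}),
      ⟪ks z, Zs^[n] f⟫_ℂ = (z : ℂ) ^ n * ⟪ks z, f⟫_ℂ := by
    intro n
    induction n with
    | zero => intro z; simp
    | succ n ih =>
      intro z
      rw [Function.iterate_succ_apply', hZs, ih, pow_succ]; ring
  have hZsf_ne : ∀ n : ℕ, Zs^[n] f ≠ 0 := by
    intro n hn
    have := hiter_s n z0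
    rw [hn, inner_zero_right] at this
    exact (mul_ne_zero (pow_ne_zero n hz0) hfz0) this.symm
  have hZsf_pos : ∀ n : ℕ, 0 < ‖Zs^[n] f‖ := fun n => norm_pos_iff.mpr (hZsf_ne n)
  -- orthogonality to all kl z forces zero
  have zero_of_orth : ∀ u : Hl, (∀ z, ⟪kl z, u⟫_ℂ = 0) → u = 0 := by
    intro u hu
    have hmem : u ∈ (Submodule.span ℂ (Set.range kl))ᗮ := by
      rw [Submodule.mem_orthogonal]
      intro v hv
      induction hv using Submodule.span_induction with
      | mem v hv => obtain ⟨z, rfl⟩ := hv; exact hu z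
      | zero => simp
      | add v w _ _ hv hw => rw [inner_add_left, hv, hw, add_zero]
      | smul c v _ hv => rw [inner_smul_left, hv, mul_zero]
    have htop : (Submodule.span ℂ (Set.range kl)).topologicalClosure = ⊤ :=
      Submodule.dense_iff_topologicalClosure_eq_top.mp hdense_l
    have hbot : (Submodule.span ℂ (Set.range kl))ᗮ = ⊥ :=
      Submodule.topologicalClosure_eq_top_iff.mp htop
    simpa [hbot] using hmem
  -- main part (1)
  have part1 : ∀ (φ : {z : ℂ // ‖z‖ < 1} → ℂ) (T : Hs →L[ℂ] Hl), IsMultiplier ks kl φ T →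
      ∀ c > (0 : ℝ), ∃ h : Hs, ‖T h‖ < c * ‖h‖ := by
    intro φ T hT c hc
    -- intertwining
    have hTinner : ∀ (u : Hs) z, ⟪kl z, T u⟫_ℂ = φ z * ⟪ks z, u⟫_ℂ := by
      intro u z
      rw [← ContinuousLinearMap.adjoint_inner_left, hT z, inner_smul_left]
      simp
    have key : ∀ u : Hs, T (Zs u) = Zl (T u) := by
      intro u
      have horth : ∀ z, ⟪kl z, T (Zs u) - Zl (T u)⟫_ℂ = 0 := by
        intro z
        rw [inner_sub_right, hTinner, hZl, hTinner, hZs]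
        ring
      have := zero_of_orth _ horth
      rwa [sub_eq_zero] at this
    have keyn : ∀ n : ℕ, T (Zs^[n] f) = Zl^[n] (T f) := by
      intro n
      induction n with
      | zero => simp
      | succ n ih => rw [Function.iterate_succ_apply', Function.iterate_succ_apply', key, ih]
    have := (hlim (T f)).eventually (gt_mem_nhds hc)
    obtain ⟨n, hn⟩ := this.exists
    refine ⟨Zs^[n] f, ?_⟩
    have : ‖Zl^[n] (T f)‖ / ‖Zs^[n] f‖ < c := hn
    rw [div_lt_iff₀ (hZsf_pos n)] at this
    rw [keyn n]
    linarith [this]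
  refine ⟨part1, ?_⟩
  -- part (2)
  intro φ T hT hinj hclosed
  set p : Submodule ℂ Hl := LinearMap.range (T : Hs →ₗ[ℂ] Hl) with hp
  have hpclosed : IsClosed (p : Set Hl) := by
    simpa [hp, LinearMap.coe_range] using hclosed
  haveI : CompleteSpace p := hpclosed.completeSpace_coe
  set T' : Hs →L[ℂ] p := T.codRestrict p (fun x => LinearMap.mem_range_self _ x) with hT'
  have hker : LinearMap.ker (T' : Hs →ₗ[ℂ] p) = ⊥ := by
    ext x
    simp only [LinearMap.mem_ker, Submodule.mem_bot]
    constructor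
    · intro hx
      have hx' : T x = 0 := congrArg Subtype.val hx
      exact hinj (by simpa using hx')
    · rintro rfl
      exact Subtype.ext (by simp [hT', ContinuousLinearMap.coe_codRestrict_apply])
  have hrange : LinearMap.range (T' : Hs →ₗ[ℂ] p) = ⊤ := by
    rw [LinearMap.range_eq_top]
    rintro ⟨y, hy⟩
    obtain ⟨x, rfl⟩ := hy
    exact ⟨x, rfl⟩
  let e := ContinuousLinearEquiv.ofBijective T' hker hrange
  set M : ℝ := ‖(e.symm : p →L[ℂ] Hs)‖ with hM
  have hMnn : 0 ≤ M := norm_nonneg _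
  have hcpos : (0 : ℝ) < (M + 1)⁻¹ := by positivity
  obtain ⟨h, hh⟩ := part1 φ T hT (M + 1)⁻¹ hcpos
  have hbound : ‖h‖ ≤ M * ‖T h‖ := by
    have h1 : e.symm (T' h) = h := e.symm_apply_apply h
    calc ‖h‖ = ‖e.symm (T' h)‖ := by rw [h1]
      _ ≤ M * ‖T' h‖ := (e.symm : p →L[ℂ] Hs).le_opNorm _
      _ = M * ‖T h‖ := rfl
  have h2 : (M + 1) * ‖T h‖ < ‖h‖ := by
    have hpos : (0 : ℝ) < M + 1 := by linarith
    have := mul_lt_mul_of_pos_left hh hpos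
    calc (M + 1) * ‖T h‖ < (M + 1) * ((M + 1)⁻¹ * ‖h‖) := this
      _ = ‖h‖ := by field_simp
  rw [add_mul, one_mul] at h2
  linarith [norm_nonneg (T h)]
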